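/- For every integer k ≥ 1, the constant term of the interpolation polynomial r_{(k)} satisfies r_{(k)}(0) = (−1)^{k−1}·(2k−3)!!/k!. -/

import Mathlib

open Polynomial

/-- The defining interpolation conditions of the polynomial `r_{(k)}` (`k ≥ 1`):
degree `≤ 2k−1`, zeros at `−1, …, −(k−1)`, and value
`(−2)^{−(k−1)}·(1/2)_{k−1}/(k−1)!` at the points `1/2 − i` for `i = 0, 1, …, k`. -/
def rCond (k : ℕ) (p : Polynomial ℚ) : Prop :=
  p.natDegree ≤ 2 * k - 1 ∧
  (∀ i : ℕ, 1 ≤ i → i ≤ k - 1 → p.eval (-(i : ℚ)) = 0) ∧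
  (∀ i : ℕ, i ≤ k →
    p.eval (1 / 2 - (i : ℚ))
      = (-2 : ℚ) ^ (-((k : ℤ) - 1)) * (ascPochhammer ℚ (k - 1)).eval (1 / 2)
          / ((k - 1).factorial : ℚ))

section Aux

open Finset fwdDiff

private lemma fwdDiff_eval (h : ℚ) (p : ℚ[X]) :
    Δ_[h] (fun x => p.eval x) = fun x => (p.comp (X + C h) - p).eval x := by
  funext x; simp [fwdDiff, eval_comp]

private lemma degree_comp_sub_lt (p : ℚ[X]) (h : ℚ) (hp : p.natDegree ≠ 0) :
    (p.comp (X + C h) - p).degree < p.degree := by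
  have h1 : (p.comp (X + C h)).natDegree = p.natDegree := by
    rw [natDegree_comp]; simp
  have h2 : (p.comp (X + C h)).leadingCoeff = p.leadingCoeff := by
    rw [leadingCoeff_comp (by simp)]; simp
  have hp0 : p ≠ 0 := fun h => hp (by simp [h])
  have hc0 : p.comp (X + C h) ≠ 0 := by
    intro hh
    exact hp0 (leadingCoeff_eq_zero.mp (by rw [← h2, hh, leadingCoeff_zero]))
  have := Polynomial.degree_sub_lt
    (by rw [degree_eq_natDegree hc0, degree_eq_natDegree hp0, h1]) hc0 h2
  rwa [degree_eq_natDegree hc0, h1, ← degree_eq_natDegree hp0] at this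

private lemma fwdDiff_iter_poly_zero :
    ∀ (N : ℕ) (p : ℚ[X]), p.natDegree < N → ∀ (h x : ℚ),
      (Δ_[h])^[N] (fun y => p.eval y) x = 0 := by
  intro N
  induction N with
  | zero => intro p hp; omega
  | succ N ih =>
    intro p hp h x
    rw [Function.iterate_succ_apply, fwdDiff_eval]
    by_cases h0 : p.natDegree = 0
    · obtain ⟨a, rfl⟩ := natDegree_eq_zero.mp h0
      have hz : (fun y : ℚ => ((C a).comp (X + C h) - C a).eval y)
          = (fun _ : ℚ => (0 : ℚ)) := by
        funext y; simp
      rw [hz, Function.iterate_fixed (by funext y; simp [fwdDiff])]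
    · apply ih
      by_cases hq : p.comp (X + C h) - p = 0
      · rw [hq]
        simp only [natDegree_zero]
        omega
      · have h1 := degree_comp_sub_lt p h h0
        have h2 := natDegree_lt_natDegree hq h1
        omega

private lemma key_sum (N : ℕ) (p : ℚ[X]) (hdeg : p.natDegree < N) (h y : ℚ) :
    ∑ n ∈ range (N + 1), (-1 : ℚ) ^ (N - n) * (N.choose n : ℚ) * p.eval (y + n * h) = 0 := by
  have h0 := fwdDiff_iter_eq_sum_shift (h := h) (fun x => p.eval x) N y
  rw [fwdDiff_iter_poly_zero N p hdeg h y] at h0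
  refine Eq.trans ?_ h0.symm
  refine Finset.sum_congr rfl fun n _ => ?_
  rw [zsmul_eq_mul, nsmul_eq_mul]
  push_cast
  ring

private lemma sum_parity (k : ℕ) (f : ℕ → ℚ) :
    ∑ n ∈ range (2 * k + 1), f n
      = ∑ i ∈ range (k + 1), f (2 * i) + ∑ i ∈ range k, f (2 * i + 1) := by
  induction k with
  | zero => simp
  | succ k ih =>
    have e : 2 * (k + 1) + 1 = (2 * k + 1) + 1 + 1 := by ring
    rw [e, sum_range_succ, sum_range_succ, ih]
    have hA : ∑ i ∈ range (k + 1 + 1), f (2 * i)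
        = ∑ i ∈ range (k + 1), f (2 * i) + f (2 * (k + 1)) := sum_range_succ _ _
    have hB : ∑ i ∈ range (k + 1), f (2 * i + 1)
        = ∑ i ∈ range k, f (2 * i + 1) + f (2 * k + 1) := sum_range_succ _ _
    rw [hA, hB, show 2 * (k + 1) = 2 * k + 1 + 1 from by ring]
    ring

private lemma asc_half (m : ℕ) :
    (ascPochhammer ℚ m).eval (1 / 2 : ℚ) = (Nat.doubleFactorial (2 * m - 1) : ℚ) / 2 ^ m := by
  induction m with
  | zero => simp
  | succ m ih =>
    rw [ascPochhammer_succ_eval, ih]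
    have hdf : (Nat.doubleFactorial (2 * (m + 1) - 1) : ℚ)
        = (2 * m + 1) * Nat.doubleFactorial (2 * m - 1) := by
      cases m with
      | zero => norm_num [Nat.doubleFactorial]
      | succ m =>
        have e1 : 2 * (m + 1 + 1) - 1 = 2 * m + 1 + 2 := by omega
        have e2 : 2 * (m + 1) - 1 = 2 * m + 1 := by omega
        rw [e1, e2, Nat.doubleFactorial_add_two]
        push_cast
        ring
    rw [hdf]
    have : (2 : ℚ) ^ (m + 1) = 2 ^ m * 2 := by ring
    rw [this]
    field_simp
    ring

private lemma even_choose_sum (k : ℕ) (hk : 1 ≤ k) :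
    ∑ i ∈ range (k + 1), ((2 * k).choose (2 * i) : ℚ) = 2 ^ (2 * k) / 2 := by
  set E : ℚ := ∑ i ∈ range (k + 1), ((2 * k).choose (2 * i) : ℚ) with hE
  set O : ℚ := ∑ i ∈ range k, ((2 * k).choose (2 * i + 1) : ℚ) with hO
  have h1 : E + O = 2 ^ (2 * k) := by
    rw [hE, hO, ← sum_parity k (fun n => ((2 * k).choose n : ℚ))]
    have := Nat.sum_range_choose (2 * k)
    have := congrArg (fun n : ℕ => (n : ℚ)) this
    push_cast at this
    exact this
  have h2 : E - O = 0 := by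
    have halt : (∑ n ∈ range (2 * k + 1), ((-1 : ℤ) ^ n * (2 * k).choose n : ℤ)) = 0 :=
      Int.alternating_sum_range_choose_of_ne (by omega)
    have halt' : (∑ n ∈ range (2 * k + 1), ((-1 : ℚ) ^ n * ((2 * k).choose n : ℚ))) = 0 := by
      have := congrArg (fun z : ℤ => (z : ℚ)) halt
      push_cast at this
      exact this
    rw [sum_parity k (fun n => ((-1 : ℚ) ^ n * ((2 * k).choose n : ℚ)))] at halt'
    have he : ∀ i : ℕ, (-1 : ℚ) ^ (2 * i) * ((2 * k).choose (2 * i) : ℚ)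
        = ((2 * k).choose (2 * i) : ℚ) := by
      intro i
      rw [pow_mul]
      norm_num
    have ho : ∀ i : ℕ, (-1 : ℚ) ^ (2 * i + 1) * ((2 * k).choose (2 * i + 1) : ℚ)
        = -((2 * k).choose (2 * i + 1) : ℚ) := by
      intro i
      rw [pow_succ, pow_mul]
      norm_num
    rw [Finset.sum_congr rfl (fun i _ => he i), Finset.sum_congr rfl (fun i _ => ho i),
      Finset.sum_neg_distrib] at halt'
    rw [hE, hO]
    linarith [halt']
  linarith [h1, h2]

end Aux

/-- For every integer `k ≥ 1`, the constant term of the interpolation polynomial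
`r_{(k)}` satisfies `r_{(k)}(0) = (−1)^{k−1}·(2k−3)!!/k!`. -/
theorem r_k_constant_term (k : ℕ) (hk : 1 ≤ k) (p : Polynomial ℚ) (hp : rCond k p) :
    p.eval 0
      = (-1 : ℚ) ^ (k - 1) * (Nat.doubleFactorial (2 * k - 3) : ℚ) / (k.factorial : ℚ) := by
  obtain ⟨hdeg, hzero, hval⟩ := hp
  obtain ⟨m, rfl⟩ : ∃ m, k = m + 1 := ⟨k - 1, by omega⟩
  set k := m + 1 with hk1
  set c : ℚ := (-2 : ℚ) ^ (-((k : ℤ) - 1)) * (ascPochhammer ℚ (k - 1)).eval (1 / 2)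
      / ((k - 1).factorial : ℚ) with hc
  have hkey := key_sum (2 * k) p (by omega) (1 / 2) (1 / 2 - (k : ℚ))
  rw [sum_parity k
    (fun n => (-1 : ℚ) ^ (2 * k - n) * ((2 * k).choose n : ℚ)
      * p.eval (1 / 2 - (k : ℚ) + n * (1 / 2)))] at hkey
  -- even terms
  have heven : ∀ i ∈ Finset.range (k + 1),
      (-1 : ℚ) ^ (2 * k - 2 * i) * ((2 * k).choose (2 * i) : ℚ)
        * p.eval (1 / 2 - (k : ℚ) + (2 * i : ℕ) * (1 / 2))
      = ((2 * k).choose (2 * i) : ℚ) * c := by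
    intro i hi
    rw [Finset.mem_range] at hi
    have hik : i ≤ k := by omega
    have hpt : (1 / 2 : ℚ) - (k : ℚ) + ((2 * i : ℕ) : ℚ) * (1 / 2) = 1 / 2 - ((k - i : ℕ) : ℚ) := by
      push_cast [Nat.cast_sub hik]
      ring
    have hsign : (-1 : ℚ) ^ (2 * k - 2 * i) = 1 :=
      Even.neg_one_pow ⟨k - i, by omega⟩
    rw [hpt, hval (k - i) (by omega), hsign]
    ring
  -- odd terms
  have hodd : ∀ i ∈ Finset.range m,
      (-1 : ℚ) ^ (2 * k - (2 * i + 1)) * ((2 * k).choose (2 * i + 1) : ℚ)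
        * p.eval (1 / 2 - (k : ℚ) + ((2 * i + 1 : ℕ) : ℚ) * (1 / 2))
      = 0 := by
    intro i hi
    rw [Finset.mem_range] at hi
    have hpt : (1 / 2 : ℚ) - (k : ℚ) + ((2 * i + 1 : ℕ) : ℚ) * (1 / 2)
        = -(((m - i : ℕ) : ℚ)) := by
      push_cast [Nat.cast_sub (by omega : i ≤ m), hk1]
      ring
    rw [hpt, hzero (m - i) (by omega) (by omega)]
    ring
  rw [Finset.sum_congr rfl heven, ← Finset.sum_mul, even_choose_sum k hk,
    Finset.sum_range_succ] at hkey
  rw [Finset.sum_congr rfl hodd] at hkey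
  -- the last odd term is the p(0) term
  have hlast : (-1 : ℚ) ^ (2 * k - (2 * m + 1)) * ((2 * k).choose (2 * m + 1) : ℚ)
      * p.eval (1 / 2 - (k : ℚ) + ((2 * m + 1 : ℕ) : ℚ) * (1 / 2))
      = -(2 * k : ℚ) * p.eval 0 := by
    have hpt : (1 / 2 : ℚ) - (k : ℚ) + ((2 * m + 1 : ℕ) : ℚ) * (1 / 2) = 0 := by
      push_cast [hk1]
      ring
    have hsign : (-1 : ℚ) ^ (2 * k - (2 * m + 1)) = -1 :=
      Odd.neg_one_pow ⟨0, by omega⟩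
    have hch : (2 * k).choose (2 * m + 1) = 2 * k := by
      have h1 : 2 * m + 1 = 2 * k - 1 := by omega
      rw [h1, Nat.choose_symm (by omega : 1 ≤ 2 * k), Nat.choose_one_right]
    rw [hpt, hsign, hch]
    push_cast
    ring
  rw [hlast] at hkey
  simp only [Finset.sum_const_zero, zero_add] at hkey
  -- now hkey : 2^(2k)/2 * c + (-(2k) * p.eval 0) = 0
  have hkne : (2 * (k : ℚ)) ≠ 0 := by positivity
  have harith : 2 ^ (2 * k) / 2 * c
      = (2 * (k : ℚ)) * ((-1 : ℚ) ^ (k - 1) * (Nat.doubleFactorial (2 * k - 3) : ℚ)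
          / (k.factorial : ℚ)) := by
    rw [hc]
    have e1 : k - 1 = m := by omega
    have e2 : 2 * k - 3 = 2 * m - 1 := by omega
    have e3 : 2 * k = 2 * m + 2 := by omega
    rw [e1, e2, e3, asc_half m]
    have ez : (-((k : ℤ) - 1)) = -(m : ℤ) := by push_cast [hk1]; ring
    rw [ez, zpow_neg, zpow_natCast]
    have h2m : ((-2 : ℚ) ^ m)⁻¹ = (-1 : ℚ) ^ m / 2 ^ m := by
      rw [neg_pow, mul_inv]
      congr 1
      rcases Nat.even_or_odd m with h | h
      · rw [h.neg_one_pow]; norm_num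
      · rw [h.neg_one_pow]; norm_num
    rw [h2m]
    have hfac : (k.factorial : ℚ) = ((m : ℚ) + 1) * (m.factorial : ℚ) := by
      rw [hk1]; push_cast [Nat.factorial_succ]; ring
    have hk2 : (k : ℚ) = (m : ℚ) + 1 := by push_cast [hk1]; ring
    rw [hfac, hk2]
    have hne1 : ((m : ℚ) + 1) ≠ 0 := by positivity
    have hne2 : (m.factorial : ℚ) ≠ 0 := by positivity
    have hne3 : (2 : ℚ) ^ m ≠ 0 := by positivity
    field_simp
    ring
  have h2 : (2 * (k : ℚ)) * p.eval 0
      = (2 * (k : ℚ)) * ((-1 : ℚ) ^ (k - 1) * (Nat.doubleFactorial (2 * k - 3) : ℚ)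
          / (k.factorial : ℚ)) := by
    linear_combination -hkey + harith
  exact mul_left_cancel₀ hkne h2
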